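/- Let d ≥ 1 and let P ⊆ ℝ^d be a closed convex cone which is pointed (P ∩ (−P) = {0}), with topological interior Ω, and let a ∈ Ω. For k ∈ ℕ set L_k := (Ω + k•a) \ (Ω + (k+1)•a). Then the sets L_k (k ∈ ℕ) are pairwise disjoint, ⋃_{k∈ℕ} L_k = Ω, and for every k ∈ ℕ one has Ω + k•a = ⋃_{m ≥ k} L_m. In particular, every x ∈ Ω lies in exactly one set L_k. -/

import Mathlib

open Set Pointwise

/-- For a pointed closed convex cone `P ⊆ ℝ^d` (`d ≥ 1`) with interior `Ω` and
`a ∈ Ω`, the sets `L k := (Ω + k•a) \ (Ω + (k+1)•a)` are pairwise disjoint,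
their union is `Ω`, `Ω + k•a = ⋃_{m ≥ k} L m`, and every `x ∈ Ω` lies in
exactly one `L k`. -/
theorem stmt_6 (d : ℕ) (hd : 1 ≤ d) (P : Set (Fin d → ℝ)) (hclosed : IsClosed P)
    (hadd : ∀ x ∈ P, ∀ y ∈ P, x + y ∈ P)
    (hsmul : ∀ (t : ℝ), 0 ≤ t → ∀ x ∈ P, t • x ∈ P)
    (hpointed : P ∩ (-P) = {0})
    (a : Fin d → ℝ) (ha : a ∈ interior P)
    (L : ℕ → Set (Fin d → ℝ))
    (hL : ∀ k : ℕ,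
      L k = ((fun x => x + k • a) '' interior P) \ ((fun x => x + (k + 1) • a) '' interior P)) :
    Pairwise (Function.onFun Disjoint L) ∧
      (⋃ k : ℕ, L k) = interior P ∧
      (∀ k : ℕ, (fun x => x + k • a) '' interior P = ⋃ m : ℕ, ⋃ _ : k ≤ m, L m) ∧
      (∀ x ∈ interior P, ∃! k : ℕ, x ∈ L k) := by
  have haP : a ∈ P := interior_subset ha
  have hΩP : ∀ x ∈ interior P, ∀ y ∈ P, x + y ∈ interior P := by
    intro x hx y hy
    have hsub : (fun z => z + y) '' interior P ⊆ P := by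
      rintro _ ⟨z, hz, rfl⟩
      exact hadd z (interior_subset hz) y hy
    have hopen : IsOpen ((fun z => z + y) '' interior P) :=
      (isOpenMap_add_right y) _ isOpen_interior
    exact interior_maximal hsub hopen ⟨x, hx, rfl⟩
  have hPn : ∀ n : ℕ, (n • a) ∈ P := by
    intro n
    rw [← Nat.cast_smul_eq_nsmul ℝ]
    exact hsmul _ (by positivity) a haP
  have hiff : ∀ (k : ℕ) (x : Fin d → ℝ),
      x ∈ (fun y => y + k • a) '' interior P ↔ x - k • a ∈ interior P := by
    intro k x
    constructor
    · rintro ⟨y, hy, rfl⟩; simpa using hy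
    · intro h; exact ⟨x - k • a, h, sub_add_cancel x _⟩
  have hmono : ∀ (x : Fin d → ℝ) (k m : ℕ), k ≤ m → x - m • a ∈ interior P →
      x - k • a ∈ interior P := by
    intro x k m hkm hx
    have h1 : m • a = k • a + (m - k) • a := by
      rw [← add_nsmul, Nat.add_sub_cancel' hkm]
    have h2 : x - k • a = (x - m • a) + (m - k) • a := by rw [h1]; abel
    rw [h2]
    exact hΩP _ hx _ (hPn _)
  have ha0 : a ≠ 0 := by
    intro h
    have h0 : (0 : Fin d → ℝ) ∈ interior P := h ▸ ha
    obtain ⟨ε, hε, hball⟩ := Metric.mem_nhds_iff.mp (mem_interior_iff_mem_nhds.mp h0)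
    have hP : ∀ v : Fin d → ℝ, v ∈ P := by
      intro v
      have ht : (0:ℝ) < ε / (‖v‖ + 1) := by positivity
      have hv : (ε / (‖v‖ + 1)) • v ∈ Metric.ball (0 : Fin d → ℝ) ε := by
        rw [Metric.mem_ball, dist_zero_right, norm_smul]
        calc ‖(ε / (‖v‖+1))‖ * ‖v‖ = ε / (‖v‖+1) * ‖v‖ := by rw [Real.norm_of_nonneg ht.le]
          _ < ε := by
            rw [div_mul_eq_mul_div, div_lt_iff₀ (by positivity)]
            nlinarith [norm_nonneg v]
      have h2 := hsmul (ε / (‖v‖+1))⁻¹ (by positivity) _ (hball hv)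
      rwa [smul_smul, inv_mul_cancel₀ (ne_of_gt ht), one_smul] at h2
    have hv1 : (fun _ => (1:ℝ)) ∈ P ∩ (-P) := ⟨hP _, Set.mem_neg.mpr (hP _)⟩
    rw [hpointed] at hv1
    have h3 := congrFun hv1 ⟨0, hd⟩
    norm_num at h3
  have hnot : ∀ x : Fin d → ℝ, ∃ K : ℕ, x - K • a ∉ interior P := by
    intro x
    by_contra hc
    push_neg at hc
    have hmemP : ∀ k : ℕ, x - k • a ∈ P := fun k => interior_subset (hc k)
    have hseq : ∀ k : ℕ, 1 ≤ k → ((k:ℝ))⁻¹ • (x - k • a) ∈ P := by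
      intro k _
      exact hsmul _ (by positivity) _ (hmemP k)
    have heq : ∀ k : ℕ, 1 ≤ k → ((k:ℝ))⁻¹ • (x - k • a) = ((k:ℝ))⁻¹ • x - a := by
      intro k hk
      have hk0 : (k:ℝ) ≠ 0 := by positivity
      rw [smul_sub, ← Nat.cast_smul_eq_nsmul ℝ, smul_smul, inv_mul_cancel₀ hk0, one_smul]
    have hlim : Filter.Tendsto (fun k : ℕ => ((k:ℝ))⁻¹ • x - a) Filter.atTop (nhds (-a)) := by
      have h1 : Filter.Tendsto (fun k : ℕ => ((k:ℝ))⁻¹ • x) Filter.atTop (nhds 0) := by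
        have := (tendsto_inv_atTop_nhds_zero_nat (𝕜 := ℝ)).smul_const x
        simpa using this
      have h2 := h1.sub_const a
      simpa using h2
    have hlim2 : Filter.Tendsto (fun k : ℕ => ((k:ℝ))⁻¹ • (x - k • a)) Filter.atTop (nhds (-a)) := by
      refine hlim.congr' ?_
      filter_upwards [Filter.eventually_ge_atTop 1] with k hk
      exact (heq k hk).symm
    have hnegA : -a ∈ P := hclosed.mem_of_tendsto hlim2 (by
      filter_upwards [Filter.eventually_ge_atTop 1] with k hk
      exact hseq k hk)
    have hmem2 : a ∈ P ∩ (-P) := ⟨haP, Set.mem_neg.mpr hnegA⟩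
    rw [hpointed] at hmem2
    exact ha0 (by simpa using hmem2)
  have main : ∀ (x : Fin d → ℝ) (k : ℕ), x - k • a ∈ interior P →
      ∃ n : ℕ, k ≤ n ∧ x ∈ L n ∧ ∀ m : ℕ, x ∈ L m → m = n := by
    intro x k hk
    classical
    have hex : ∃ j : ℕ, x - (j+1) • a ∉ interior P := by
      obtain ⟨K, hK⟩ := hnot x
      exact ⟨K, fun h => hK (hmono x K (K+1) (Nat.le_succ K) h)⟩
    have hn1 : x - (Nat.find hex + 1) • a ∉ interior P := Nat.find_spec hex
    have hn0 : x - Nat.find hex • a ∈ interior P := by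
      rcases Nat.eq_zero_or_pos (Nat.find hex) with h | h
      · rw [h]; exact hmono x 0 k (Nat.zero_le k) hk
      · have hlt : Nat.find hex - 1 < Nat.find hex := Nat.sub_lt h one_pos
        have hmin := Nat.find_min hex hlt
        have heq2 : Nat.find hex - 1 + 1 = Nat.find hex := Nat.succ_pred_eq_of_pos h
        rw [heq2] at hmin
        exact not_not.mp hmin
    refine ⟨Nat.find hex, ?_, ?_, ?_⟩
    · by_contra hlt
      push_neg at hlt
      exact hn1 (hmono x (Nat.find hex + 1) k hlt hk)
    · rw [hL]
      exact ⟨(hiff _ x).mpr hn0, fun h => hn1 ((hiff _ x).mp h)⟩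
    · intro m hm
      rw [hL] at hm
      obtain ⟨hm1, hm2⟩ := hm
      have hm1' := (hiff m x).mp hm1
      have hm2' : x - (m+1) • a ∉ interior P := fun h => hm2 ((hiff _ x).mpr h)
      rcases lt_trichotomy m (Nat.find hex) with h | h | h
      · exact absurd (hmono x (m+1) (Nat.find hex) h hn0) hm2'
      · exact h
      · exact absurd (hmono x (Nat.find hex + 1) m h hm1') hn1
  refine ⟨?_, ?_, ?_, ?_⟩
  · intro i j hij
    show Disjoint (L i) (L j)
    rw [Set.disjoint_left]
    intro x hxi hxj
    have hxi' := hxi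
    rw [hL i] at hxi'
    have hxΩ : x - (0:ℕ) • a ∈ interior P :=
      hmono x 0 i (Nat.zero_le i) ((hiff i x).mp hxi'.1)
    obtain ⟨n, -, -, huniq⟩ := main x 0 hxΩ
    exact hij ((huniq i hxi).trans (huniq j hxj).symm)
  · ext x
    simp only [Set.mem_iUnion]
    constructor
    · rintro ⟨k, hk⟩
      rw [hL k] at hk
      have h0 : x - (0:ℕ) • a ∈ interior P :=
        hmono x 0 k (Nat.zero_le k) ((hiff k x).mp hk.1)
      simpa using h0
    · intro hx
      have h0 : x - (0:ℕ) • a ∈ interior P := by simpa using hx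
      obtain ⟨n, -, hxn, -⟩ := main x 0 h0
      exact ⟨n, hxn⟩
  · intro k
    ext x
    simp only [Set.mem_iUnion]
    constructor
    · intro hx
      obtain ⟨n, hkn, hxn, -⟩ := main x k ((hiff k x).mp hx)
      exact ⟨n, hkn, hxn⟩
    · rintro ⟨m, hkm, hxm⟩
      rw [hL m] at hxm
      exact (hiff k x).mpr (hmono x k m hkm ((hiff m x).mp hxm.1))
  · intro x hx
    have h0 : x - (0:ℕ) • a ∈ interior P := by simpa using hx
    obtain ⟨n, -, hxn, huniq⟩ := main x 0 h0
    exact ⟨n, hxn, huniq⟩
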